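/- Let P be a place of a function field F of characteristic p and ω a rational differential with v_P(ω) ≥ 0. Then v_P(C(ω)) ≥ 0, where C is the Cartier operator. -/
import Mathlib


/-- If a rational differential `ω` satisfies `v_P(ω) ≥ 0` at a place
`P`, then `v_P(C(ω)) ≥ 0` (with the convention that the zero differential has
valuation `∞`, so the conclusion holds trivially when `C(ω) = 0`). -/
theorem cartier_regular_of_regular
    {p : ℕ} (hp : p.Prime)
    {F : Type*} [Field F] [CharP F p]
    {Ω : Type*} [AddCommGroup Ω] [Module F Ω]
    -- the universal derivation on rational differential forms
    (d : F → Ω)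
    (hd_add : ∀ a b : F, d (a + b) = d a + d b)
    (hd_mul : ∀ a b : F, d (a * b) = a • d b + b • d a)
    -- `z` is a uniformizing parameter at the place `P` (hence a separating element)
    (z : F)
    -- `vF` is the discrete valuation of `F` at the place `P`
    (vF : F → ℤ)
    (hv_mul : ∀ a b : F, a ≠ 0 → b ≠ 0 → vF (a * b) = vF a + vF b)
    (hv_add : ∀ a b : F, a ≠ 0 → b ≠ 0 → a + b ≠ 0 → min (vF a) (vF b) ≤ vF (a + b))
    (hz : vF z = 1)
    (hbasis : ∀ ω : Ω, ∃! g : F, ω = g • d z)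
    (hdec : ∀ g : F, ∃ c : Fin p → F, g = ∑ i : Fin p, (c i) ^ p * z ^ (i : ℕ))
    -- `vΩ` is the valuation of differentials at `P`
    (vΩ : Ω → ℤ)
    (hvΩ : ∀ g : F, g ≠ 0 → vΩ (g • d z) = vF g)
    -- the Cartier operator
    (C : Ω → Ω)
    (hC : ∀ c : Fin p → F,
      C ((∑ i : Fin p, (c i) ^ p * z ^ (i : ℕ)) • d z)
        = c ⟨p - 1, Nat.sub_lt hp.pos Nat.one_pos⟩ • d z) :
    ∀ ω : Ω, ω ≠ 0 → 0 ≤ vΩ ω → (C ω = 0 ∨ 0 ≤ vΩ (C ω)) := by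
  classical
  intro ω hω hvω
  -- basic valuation facts
  have hv1 : vF 1 = 0 := by
    have h := hv_mul 1 1 one_ne_zero one_ne_zero
    rw [one_mul] at h; omega
  have hvm1 : vF (-1 : F) = 0 := by
    have h := hv_mul (-1 : F) (-1) (by norm_num) (by norm_num)
    rw [neg_mul_neg, one_mul, hv1] at h; omega
  have hvneg : ∀ x : F, x ≠ 0 → vF (-x) = vF x := by
    intro x hx
    rw [show -x = (-1 : F) * x by ring, hv_mul _ _ (by norm_num) hx, hvm1, zero_add]
  have hvpow : ∀ x : F, x ≠ 0 → ∀ n : ℕ, vF (x ^ n) = n * vF x := by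
    intro x hx n
    induction n with
    | zero => simpa using hv1
    | succ n ih =>
      rw [pow_succ, hv_mul _ _ (pow_ne_zero n hx) hx, ih]
      push_cast; ring
  -- the derivation kills 0
  have hd0 : d (0 : F) = 0 := by
    have h := hd_add 0 0
    simpa using h.symm
  -- get the coordinate of ω
  obtain ⟨g, hg, hguniq⟩ := hbasis ω
  have hgne : g ≠ 0 := by
    intro h; apply hω; rw [hg, h, zero_smul]
  have hzne : z ≠ 0 := by
    intro h; apply hω; rw [hg, h, hd0, smul_zero]
  have hvΩω : vΩ ω = vF g := by rw [hg]; exact hvΩ g hgne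
  -- two-element ultrametric equality
  have key2 : ∀ a b : F, a ≠ 0 → b ≠ 0 → vF a ≠ vF b →
      a + b ≠ 0 ∧ vF (a + b) = min (vF a) (vF b) := by
    intro a b ha hb hne
    have hab : a + b ≠ 0 := by
      intro h
      have : a = -b := eq_neg_of_add_eq_zero_left h
      exact hne (by rw [this, hvneg b hb])
    refine ⟨hab, ?_⟩
    have h1 := hv_add a b ha hb hab
    have h3 := hv_add (a + b) (-b) hab (neg_ne_zero.2 hb) (by simpa using ha)
    have h4 := hv_add (a + b) (-a) hab (neg_ne_zero.2 ha) (by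
      rw [add_comm a b]; simpa using hb)
    rw [hvneg b hb, show a + b + -b = a by ring] at h3
    rw [hvneg a ha, show a + b + -a = b by ring] at h4
    omega
  -- sum over a finset of nonzero terms with pairwise distinct valuations
  have sumlem : ∀ S : Finset (Fin p), ∀ t : Fin p → F,
      (∀ i ∈ S, t i ≠ 0) →
      (∀ i ∈ S, ∀ j ∈ S, i ≠ j → vF (t i) ≠ vF (t j)) →
      S.Nonempty →
      (∑ i ∈ S, t i) ≠ 0 ∧ (∃ j ∈ S, vF (∑ i ∈ S, t i) = vF (t j)) ∧
        ∀ i ∈ S, vF (∑ i ∈ S, t i) ≤ vF (t i) := by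
    intro S
    induction S using Finset.induction_on with
    | empty => intro t _ _ hne; exact absurd hne (by simp)
    | @insert a S ha IH =>
      intro t ht hdist _
      rcases S.eq_empty_or_nonempty with hS | hS
      · subst hS
        rw [Finset.sum_insert (Finset.notMem_empty a), Finset.sum_empty, add_zero]
        refine ⟨ht a (by simp), ⟨a, by simp⟩, ?_⟩
        intro i hi
        simp only [Finset.mem_insert, Finset.notMem_empty, or_false] at hi
        subst hi
        exact le_rfl
      · obtain ⟨hr, ⟨j, hj, hrj⟩, hle⟩ := IH t
          (fun i hi => ht i (Finset.mem_insert_of_mem hi))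
          (fun i hi k hk => hdist i (Finset.mem_insert_of_mem hi) k
            (Finset.mem_insert_of_mem hk)) hS
        have hta : t a ≠ 0 := ht a (Finset.mem_insert_self a S)
        have haj : a ≠ j := fun h => ha (h ▸ hj)
        have hne : vF (t a) ≠ vF (∑ i ∈ S, t i) := by
          rw [hrj]
          exact hdist a (Finset.mem_insert_self a S) j (Finset.mem_insert_of_mem hj) haj
        obtain ⟨hne0, heq⟩ := key2 (t a) (∑ i ∈ S, t i) hta hr hne
        rw [Finset.sum_insert ha]
        refine ⟨hne0, ?_, ?_⟩
        · rcases le_total (vF (t a)) (vF (∑ i ∈ S, t i)) with h | h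
          · exact ⟨a, Finset.mem_insert_self a S, by omega⟩
          · exact ⟨j, Finset.mem_insert_of_mem hj, by omega⟩
        · intro i hi
          rcases Finset.mem_insert.mp hi with h | h
          · subst h; omega
          · have := hle i h; omega
  -- decompose g
  obtain ⟨c, hc⟩ := hdec g
  set t : Fin p → F := fun i => c i ^ p * z ^ (i : ℕ) with ht
  set S : Finset (Fin p) := Finset.univ.filter (fun i => c i ≠ 0) with hSdef
  have hgS : g = ∑ i ∈ S, t i := by
    rw [hc, ht]
    exact (Finset.sum_filter_of_ne (fun i _ hne => by
      intro h; apply hne; rw [h, zero_pow hp.pos.ne', zero_mul])).symm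
  have htval : ∀ i ∈ S, vF (t i) = p * vF (c i) + i := by
    intro i hi
    have hci : c i ≠ 0 := (Finset.mem_filter.mp hi).2
    rw [ht, hv_mul _ _ (pow_ne_zero p hci) (pow_ne_zero _ hzne),
      hvpow _ hci, hvpow _ hzne, hz, mul_one]
  have htne : ∀ i ∈ S, t i ≠ 0 := by
    intro i hi
    have hci : c i ≠ 0 := (Finset.mem_filter.mp hi).2
    exact mul_ne_zero (pow_ne_zero p hci) (pow_ne_zero _ hzne)
  have hdist : ∀ i ∈ S, ∀ j ∈ S, i ≠ j → vF (t i) ≠ vF (t j) := by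
    intro i hi j hj hij h
    rw [htval i hi, htval j hj] at h
    have hdvd : (p : ℤ) ∣ ((j : ℤ) - i) := ⟨vF (c i) - vF (c j), by linarith⟩
    have hip : (i : ℤ) < p := by exact_mod_cast i.isLt
    have hjp : (j : ℤ) < p := by exact_mod_cast j.isLt
    have hji : (j : ℤ) - i = 0 := by
      rcases lt_trichotomy ((j : ℤ) - i) 0 with hlt | heq | hgt
      · have := Int.le_of_dvd (by omega) ((dvd_neg).mpr hdvd)
        omega
      · exact heq
      · have := Int.le_of_dvd hgt hdvd
        omega
    apply hij
    have : (i : ℤ) = j := by omega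
    exact Fin.ext (by exact_mod_cast this)
  have hSne : S.Nonempty := by
    by_contra h
    rw [Finset.not_nonempty_iff_eq_empty] at h
    apply hgne
    rw [hgS, h, Finset.sum_empty]
  obtain ⟨hsne, _, hlow⟩ := sumlem S t htne hdist hSne
  -- compute C ω
  set pm1 : Fin p := ⟨p - 1, Nat.sub_lt hp.pos Nat.one_pos⟩ with hpm1
  have hCω : C ω = c pm1 • d z := by
    rw [hg, hc]; exact hC c
  by_cases hcp : c pm1 = 0
  · left; rw [hCω, hcp, zero_smul]
  · right
    rw [hCω, hvΩ _ hcp]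
    have hmem : pm1 ∈ S := Finset.mem_filter.mpr ⟨Finset.mem_univ _, hcp⟩
    have h1 : vF g ≤ vF (t pm1) := by rw [hgS]; exact hlow pm1 hmem
    have h2 : vF (t pm1) = p * vF (c pm1) + (p - 1 : ℕ) := htval pm1 hmem
    have h3 : (0 : ℤ) ≤ vF g := by rw [← hvΩω]; exact hvω
    have hp2 : (2 : ℤ) ≤ p := by exact_mod_cast hp.two_le
    have hpc : ((p - 1 : ℕ) : ℤ) = (p : ℤ) - 1 := by
      have := hp.pos; omega
    rw [h2, hpc] at h1
    by_contra h
    push_neg at h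
    have : vF (c pm1) ≤ -1 := by omega
    nlinarith
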